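/- Let K be a simplicial complex in ℝⁿ such that every n-simplex σ satisfies diam(σ) ≤ C·γ_σ, where γ_σ is the inradius of σ. Then for any vertex v of K, the number of n-simplices of K containing v is bounded by a constant depending only on n and C (independent of K and v). -/

import Mathlib

attribute [local instance] Classical.propDecidable

/-- The inradius of a set: the supremum of radii of closed balls contained in it. -/
noncomputable def inradius {n : ℕ} (s : Set (EuclideanSpace ℝ (Fin n))) : ℝ :=
  sSup {r : ℝ | 0 ≤ r ∧ ∃ x, Metric.closedBall x r ⊆ s}

section Aux

open Metric MeasureTheory Module Set

variable {n : ℕ}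

local notation "E" n => EuclideanSpace ℝ (Fin n)

/-- Star-shapedness: a homothety with ratio in [0,1] about a point of a convex set
maps the set into itself. -/
lemma star_image {s : Set (E n)} (hs : Convex ℝ s) {v : E n} (hv : v ∈ s)
    {t : ℝ} (h0 : 0 ≤ t) (h1 : t ≤ 1) : AffineMap.homothety v t '' s ⊆ s := by
  rintro _ ⟨x, hx, rfl⟩
  have := hs hx hv h0 (by linarith : (0:ℝ) ≤ 1 - t) (by ring)
  convert this using 1
  simp [AffineMap.homothety_apply]
  module

/-- The convex hull of at most `n` points in `ℝⁿ` has measure zero. -/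
lemma hull_null {A : Finset (E n)} (hA : A.card ≤ n) :
    volume (convexHull ℝ (A : Set (E n))) = 0 := by
  rcases A.eq_empty_or_nonempty with rfl | hne
  · simp
  · have hspan : affineSpan ℝ (A : Set (E n)) ≠ ⊤ := by
      intro h
      obtain ⟨m, hm⟩ : ∃ m, A.card = m + 1 := ⟨A.card - 1, (Nat.succ_pred_eq_of_pos hne.card_pos).symm⟩
      have hcard : Fintype.card {x // x ∈ A} = m + 1 := by simpa using hm
      have hle := finrank_vectorSpan_range_le ℝ (fun x : {x // x ∈ A} => (x : E n)) hcard
      rw [show Set.range (fun x : {x // x ∈ A} => (x : E n)) = (A : Set (E n)) from Subtype.range_coe] at hle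
      have hvs : vectorSpan ℝ (A : Set (E n)) = ⊤ := by
        rw [← direction_affineSpan, h]
        exact AffineSubspace.direction_top ℝ _ _
      rw [hvs] at hle
      have : finrank ℝ (⊤ : Submodule ℝ (E n)) = n := by
        rw [finrank_top]; exact finrank_euclideanSpace_fin
      omega
    refine le_antisymm ?_ (zero_le)
    calc volume (convexHull ℝ (A : Set (E n)))
        ≤ volume (affineSpan ℝ (A : Set (E n)) : Set (E n)) :=
          measure_mono (convexHull_subset_affineSpan _)
      _ ≤ 0 := le_of_eq (MeasureTheory.Measure.addHaar_affineSubspace volume _ hspan)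


end Aux

open Metric MeasureTheory Module Set in
/-- in a simplicial n-complex in ℝⁿ whose n-simplices are shape regular
(diam σ ≤ C·γ_σ), the number of n-simplices containing a given vertex is bounded by a
constant depending only on n and C. -/
theorem stmt_0 (n : ℕ) (C : ℝ) (hC : 0 < C) :
    ∃ N : ℕ, ∀ K : Finset (Finset (EuclideanSpace ℝ (Fin n))),
      (∀ σ ∈ K, σ.card = n + 1) →
      (∀ σ ∈ K, AffineIndependent ℝ (fun v : σ => (v : EuclideanSpace ℝ (Fin n)))) →
      (∀ σ ∈ K, Metric.diam (convexHull ℝ (σ : Set (EuclideanSpace ℝ (Fin n)))) ≤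
        C * inradius (convexHull ℝ (σ : Set (EuclideanSpace ℝ (Fin n))))) →
      (∀ σ ∈ K, ∀ τ ∈ K,
        convexHull ℝ (σ : Set (EuclideanSpace ℝ (Fin n))) ∩
            convexHull ℝ (τ : Set (EuclideanSpace ℝ (Fin n))) =
          convexHull ℝ ((σ ∩ τ : Finset (EuclideanSpace ℝ (Fin n))) :
            Set (EuclideanSpace ℝ (Fin n)))) →
      ∀ v : EuclideanSpace ℝ (Fin n), (K.filter fun σ => v ∈ σ).card ≤ N := by
  classical
  refine ⟨max 1 ⌈(2*C)^n⌉₊, ?_⟩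
  intro K hcard haff hreg hint v
  rcases Nat.eq_zero_or_pos n with hn | hn
  · -- n = 0 : the space is a subsingleton, so at most one simplex
    subst hn
    refine le_trans (Finset.card_le_one.mpr ?_) (le_max_left _ _)
    intro σ hσ τ hτ
    simp only [Finset.mem_filter] at hσ hτ
    have hsub : ∀ a b : EuclideanSpace ℝ (Fin 0), a = b := fun a b =>
      PiLp.ext fun i => Fin.elim0 i
    ext a
    constructor
    · intro _; obtain ⟨b, hb⟩ := Finset.card_pos.mp (by rw [hcard τ hτ.1]; omega)
      exact (hsub a b) ▸ hb
    · intro _; obtain ⟨b, hb⟩ := Finset.card_pos.mp (by rw [hcard σ hσ.1]; omega)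
      exact (hsub a b) ▸ hb
  · -- main case n ≥ 1
    set F := K.filter (fun σ => v ∈ σ) with hF
    set S : Finset (EuclideanSpace ℝ (Fin n)) → Set (EuclideanSpace ℝ (Fin n)) :=
      fun σ => convexHull ℝ (σ : Set (EuclideanSpace ℝ (Fin n))) with hS
    set D : Finset (EuclideanSpace ℝ (Fin n)) → ℝ := fun σ => Metric.diam (S σ) with hD
    set T : Finset (EuclideanSpace ℝ (Fin n)) → Set (EuclideanSpace ℝ (Fin n)) :=
      fun σ => AffineMap.homothety v (D σ)⁻¹ '' S σ with hT
    have hmemF : ∀ σ ∈ F, σ ∈ K ∧ v ∈ σ := by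
      intro σ hσ; simpa [hF, Finset.mem_filter] using hσ
    -- diameters are positive
    have hDpos : ∀ σ ∈ F, 0 < D σ := by
      intro σ hσ
      obtain ⟨hσK, _⟩ := hmemF σ hσ
      obtain ⟨x, hx, y, hy, hxy⟩ := Finset.one_lt_card.mp
        (by rw [hcard σ hσK]; omega)
      have hb : Bornology.IsBounded (S σ) :=
        isBounded_convexHull.mpr ((σ : Set (EuclideanSpace ℝ (Fin n))).toFinite.isBounded)
      have := Metric.dist_le_diam_of_mem hb
        (subset_convexHull ℝ _ hx) (subset_convexHull ℝ _ hy)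
      have hd : 0 < dist x y := dist_pos.mpr hxy
      linarith
    have hvS : ∀ σ ∈ F, v ∈ S σ := fun σ hσ =>
      subset_convexHull ℝ _ (hmemF σ hσ).2
    have hD0 : ∀ σ ∈ F, D σ ≠ 0 := fun σ hσ => (hDpos σ hσ).ne'
    have hSb : ∀ σ : Finset (EuclideanSpace ℝ (Fin n)), Bornology.IsBounded (S σ) :=
      fun σ => isBounded_convexHull.mpr ((σ : Set (EuclideanSpace ℝ (Fin n))).toFinite.isBounded)
    have hSconv : ∀ σ : Finset (EuclideanSpace ℝ (Fin n)), Convex ℝ (S σ) :=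
      fun σ => convex_convexHull ℝ _
    -- a ball of radius D σ/(2C) inside S σ
    have hball : ∀ σ ∈ F, ∃ x, Metric.closedBall x (D σ / (2*C)) ⊆ S σ := by
      intro σ hσ
      obtain ⟨hσK, hvσ⟩ := hmemF σ hσ
      have hlt : D σ / (2*C) < sSup {r : ℝ | 0 ≤ r ∧ ∃ x, Metric.closedBall x r ⊆ S σ} := by
        have h1 : D σ / C ≤ sSup {r : ℝ | 0 ≤ r ∧ ∃ x, Metric.closedBall x r ⊆ S σ} := by
          rw [div_le_iff₀ hC, mul_comm]
          exact hreg σ hσK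
        have h2 : D σ / (2*C) < D σ / C := by
          rw [div_lt_div_iff₀ (by positivity) hC]
          nlinarith [hDpos σ hσ]
        linarith
      have hne : Set.Nonempty {r : ℝ | 0 ≤ r ∧ ∃ x, Metric.closedBall x r ⊆ S σ} :=
        ⟨0, le_refl 0, v, by simpa [Metric.closedBall_zero] using hvS σ hσ⟩
      obtain ⟨r, ⟨hr0, x, hx⟩, hrlt⟩ := exists_lt_of_lt_csSup hne hlt
      exact ⟨x, (Metric.closedBall_subset_closedBall hrlt.le).trans hx⟩
    set B := volume (Metric.ball (0 : EuclideanSpace ℝ (Fin n)) 1) with hB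
    set ρ : ℝ := (2*C)⁻¹ with hρ
    have hρpos : 0 < ρ := by positivity
    -- lower bound for the volume of each rescaled simplex
    have hTvol : ∀ σ ∈ F, ENNReal.ofReal (ρ^n) * B ≤ volume (T σ) := by
      intro σ hσ
      obtain ⟨x, hx⟩ := hball σ hσ
      have h1 := measure_mono (μ := volume) (Set.image_mono (f := AffineMap.homothety v (D σ)⁻¹) hx)
      rw [MeasureTheory.Measure.addHaar_image_homothety,
        MeasureTheory.Measure.addHaar_closedBall _ x (by positivity),
        finrank_euclideanSpace_fin] at h1
      calc ENNReal.ofReal (ρ^n) * B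
          = ENNReal.ofReal |((D σ)⁻¹)^n| * (ENNReal.ofReal ((D σ / (2*C))^n) * B) := by
            rw [← mul_assoc, ← ENNReal.ofReal_mul (by positivity)]
            congr 2
            rw [abs_of_nonneg (by positivity), ← mul_pow]
            congr 1
            rw [hρ]
            field_simp
            exact (div_self (hD0 σ hσ)).symm
        _ ≤ volume (T σ) := h1
    -- rescaled simplices live in the unit ball around v
    have hTsub : ∀ σ ∈ F, T σ ⊆ Metric.closedBall v 1 := by
      intro σ hσ
      rintro _ ⟨y, hy, rfl⟩
      have hdist : dist y v ≤ D σ := Metric.dist_le_diam_of_mem (hSb σ) hy (hvS σ hσ)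
      have heq : AffineMap.homothety v (D σ)⁻¹ y - v = (D σ)⁻¹ • (y - v) := by
        simp [AffineMap.homothety_apply]
      rw [Metric.mem_closedBall, dist_eq_norm, heq, norm_smul, Real.norm_eq_abs,
        abs_of_nonneg (inv_nonneg.mpr (hDpos σ hσ).le)]
      rw [← dist_eq_norm] at *
      calc (D σ)⁻¹ * dist y v ≤ (D σ)⁻¹ * D σ := by
            exact mul_le_mul_of_nonneg_left hdist (inv_nonneg.mpr (hDpos σ hσ).le)
        _ = 1 := inv_mul_cancel₀ (hD0 σ hσ)
    -- pairwise a.e. disjointness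
    have key : ∀ σ ∈ F, ∀ τ ∈ F, σ ≠ τ → D σ ≤ D τ → volume (T σ ∩ T τ) = 0 := by
      intro σ hσ τ hτ hneq hle
      obtain ⟨hσK, hvσ⟩ := hmemF σ hσ
      obtain ⟨hτK, hvτ⟩ := hmemF τ hτ
      have hST : volume (S σ ∩ S τ) = 0 := by
        rw [hS]
        simp only
        rw [hint σ hσK τ hτK]
        apply hull_null
        by_contra h
        push_neg at h
        have h1 : σ ∩ τ = σ := Finset.eq_of_subset_of_card_le Finset.inter_subset_left
          (by rw [hcard σ hσK]; omega)
        have hστ : σ ⊆ τ := by rw [← h1]; exact Finset.inter_subset_right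
        exact hneq (Finset.eq_of_subset_of_card_le hστ
          (le_of_eq ((hcard τ hτK).trans (hcard σ hσK).symm)))
      have himg : AffineMap.homothety v (D σ) '' (T σ ∩ T τ) ⊆ S σ ∩ S τ := by
        refine (Set.image_inter_subset _ _ _).trans (Set.inter_subset_inter ?_ ?_)
        · have hcomp : (AffineMap.homothety v (D σ)) ∘ (AffineMap.homothety v (D σ)⁻¹) = id := by
            funext z
            show AffineMap.homothety v (D σ) (AffineMap.homothety v (D σ)⁻¹ z) = z
            rw [← AffineMap.homothety_mul_apply, mul_inv_cancel₀ (hD0 σ hσ),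
              AffineMap.homothety_one]
            rfl
          rw [hT]
          simp only
          rw [← Set.image_comp, hcomp, Set.image_id]
        · have hcomp : (AffineMap.homothety v (D σ)) ∘ (AffineMap.homothety v (D τ)⁻¹) =
              AffineMap.homothety v (D σ * (D τ)⁻¹) := by
            funext z
            exact (AffineMap.homothety_mul_apply v (D σ) (D τ)⁻¹ z).symm
          rw [hT]
          simp only
          rw [← Set.image_comp, hcomp]
          refine star_image (hSconv τ) (hvS τ hτ) (by positivity) ?_
          rw [← div_eq_mul_inv, div_le_one (hDpos τ hτ)]
          exact hle
      have h2 := (measure_mono himg).trans_eq hST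
      rw [MeasureTheory.Measure.addHaar_image_homothety] at h2
      have h3 : ENNReal.ofReal |(D σ) ^ finrank ℝ (EuclideanSpace ℝ (Fin n))| ≠ 0 := by
        rw [finrank_euclideanSpace_fin]
        exact (ENNReal.ofReal_pos.mpr (abs_pos.mpr (pow_ne_zero _ (hD0 σ hσ)))).ne'
      have := le_antisymm h2 (zero_le)
      rcases mul_eq_zero.mp this with h | h
      · exact absurd h h3
      · exact h
    have hAED : (↑F : Set (Finset (EuclideanSpace ℝ (Fin n)))).Pairwise
        (Function.onFun (MeasureTheory.AEDisjoint volume) T) := by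
      intro σ hσ τ hτ hneq
      rcases le_total (D σ) (D τ) with h | h
      · exact key σ hσ τ hτ hneq h
      · exact MeasureTheory.AEDisjoint.symm (key τ hτ σ hσ (Ne.symm hneq) h)
    have hmeas : ∀ σ ∈ F, MeasureTheory.NullMeasurableSet (T σ) volume := by
      intro σ hσ
      have hconv : Convex ℝ (T σ) :=
        (hSconv σ).affine_image (AffineMap.homothety v (D σ)⁻¹)
      exact hconv.nullMeasurableSet volume
    have hsum := MeasureTheory.measure_biUnion_finset₀ hAED hmeas
    have hmain : (F.card : ENNReal) * (ENNReal.ofReal (ρ^n) * B) ≤ B := by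
      calc (F.card : ENNReal) * (ENNReal.ofReal (ρ^n) * B)
          = ∑ _σ ∈ F, ENNReal.ofReal (ρ^n) * B := by rw [Finset.sum_const, nsmul_eq_mul]
        _ ≤ ∑ σ ∈ F, volume (T σ) := Finset.sum_le_sum hTvol
        _ = volume (⋃ σ ∈ F, T σ) := hsum.symm
        _ ≤ volume (Metric.closedBall v 1) := measure_mono (Set.iUnion₂_subset hTsub)
        _ = B := by
            rw [MeasureTheory.Measure.addHaar_closedBall _ v zero_le_one,
              finrank_euclideanSpace_fin, one_pow, ENNReal.ofReal_one, one_mul]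
    have hBpos : B ≠ 0 := (measure_ball_pos volume 0 one_pos).ne'
    have hBfin : B ≠ ⊤ := measure_ball_lt_top.ne
    have hcardle : (F.card : ENNReal) * ENNReal.ofReal (ρ^n) ≤ 1 := by
      refine (ENNReal.mul_le_mul_iff_left hBpos hBfin).mp ?_
      rw [one_mul, mul_assoc]
      exact hmain
    have hreal : (F.card : ℝ) * ρ^n ≤ 1 := by
      have hfin : (F.card : ENNReal) * ENNReal.ofReal (ρ^n) ≠ ⊤ :=
        ENNReal.mul_ne_top (ENNReal.natCast_ne_top _) ENNReal.ofReal_ne_top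
      have := ENNReal.toReal_mono (by simp) hcardle
      rwa [ENNReal.toReal_mul, ENNReal.toReal_natCast, ENNReal.toReal_one,
        ENNReal.toReal_ofReal (by positivity)] at this
    have hfinal : (F.card : ℝ) ≤ (2*C)^n := by
      have hρn : ρ^n = ((2*C)^n)⁻¹ := by rw [hρ, inv_pow]
      rw [hρn] at hreal
      have h2C : (0:ℝ) < (2*C)^n := by positivity
      calc (F.card : ℝ) = (F.card : ℝ) * ((2*C)^n)⁻¹ * (2*C)^n := by
            field_simp
        _ ≤ 1 * (2*C)^n := by
            exact mul_le_mul_of_nonneg_right hreal h2C.le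
        _ = (2*C)^n := one_mul _
    refine le_trans ?_ (le_max_right 1 _)
    exact_mod_cast hfinal.trans (Nat.le_ceil _)
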